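/- For integers 1 ≤ s ≤ ⌈L/2⌉, the polynomial [L choose s]_q - [L choose s-1]_q has nonnegative coefficients. -/

import Mathlib

open PowerSeries Finset

noncomputable def qPoch (n : ℕ) : PowerSeries ℚ :=
  ∏ k ∈ Finset.range n, (1 - (X : PowerSeries ℚ) ^ (k + 1))

noncomputable def gauss (L : ℕ) (s : ℤ) : PowerSeries ℚ :=
  if 0 ≤ s ∧ s ≤ (L : ℤ) then
    qPoch L * (qPoch s.toNat)⁻¹ * (qPoch (L - s.toNat))⁻¹
  else 0

lemma qPoch_zero : qPoch 0 = 1 := by simp [qPoch]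

lemma qPoch_succ (n : ℕ) : qPoch (n + 1) = qPoch n * (1 - X ^ (n + 1)) := by
  simp [qPoch, Finset.prod_range_succ]

lemma constantCoeff_qPoch (n : ℕ) : constantCoeff (R := ℚ) (qPoch n) = 1 := by
  induction n with
  | zero => simp [qPoch_zero]
  | succ n ih => simp [qPoch_succ, ih]

lemma qPoch_ne_zero (n : ℕ) : qPoch n ≠ 0 := by
  intro h
  have := constantCoeff_qPoch n
  rw [h] at this
  simp at this

lemma qPoch_mul_inv (n : ℕ) : qPoch n * (qPoch n)⁻¹ = 1 :=
  PowerSeries.mul_inv_cancel _ (by rw [constantCoeff_qPoch]; norm_num)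

lemma inv_qPoch_succ (n : ℕ) :
    (qPoch n)⁻¹ = (qPoch (n + 1))⁻¹ * (1 - X ^ (n + 1)) := by
  apply mul_left_cancel₀ (qPoch_ne_zero (n + 1))
  calc qPoch (n+1) * (qPoch n)⁻¹
      = (qPoch n * (qPoch n)⁻¹) * (1 - X ^ (n+1)) := by rw [qPoch_succ]; ring
    _ = 1 - X ^ (n+1) := by rw [qPoch_mul_inv, one_mul]
    _ = (qPoch (n+1) * (qPoch (n+1))⁻¹) * (1 - X ^ (n+1)) := by rw [qPoch_mul_inv, one_mul]
    _ = qPoch (n+1) * ((qPoch (n+1))⁻¹ * (1 - X ^ (n+1))) := by ring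

/-- `[a+b choose a]_q` as a power series. -/
noncomputable def CC (a b : ℕ) : PowerSeries ℚ :=
  qPoch (a + b) * (qPoch a)⁻¹ * (qPoch b)⁻¹

lemma CC_zero (b : ℕ) : CC 0 b = 1 := by
  rw [CC, qPoch_zero, inv_one, mul_one, zero_add, qPoch_mul_inv]

lemma CC_symm (a b : ℕ) : CC a b = CC b a := by
  rw [CC, CC, add_comm b a, mul_right_comm]

lemma pascalA (a b : ℕ) :
    CC (a+1) (b+1) = CC (a+1) b + X ^ (b+1) * CC a (b+1) := by
  have e1 : a + 1 + (b + 1) = a + (b + 1) + 1 := by omega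
  have e2 : a + 1 + b = a + (b + 1) := by omega
  rw [CC, CC, CC, e1, e2, qPoch_succ (a + (b+1)), inv_qPoch_succ a, inv_qPoch_succ b]
  ring

lemma pascalB (a b : ℕ) :
    CC (a+1) (b+1) = CC a (b+1) + X ^ (a+1) * CC (a+1) b := by
  rw [CC_symm (a+1) (b+1), pascalA b a, CC_symm (b+1) a, CC_symm b (a+1)]

/-- `[a+b choose a-1]_q`. -/
noncomputable def CP : ℕ → ℕ → PowerSeries ℚ
  | 0, _ => 0
  | (a+1), b => CC a (b+1)

lemma pascalI2 (a b : ℕ) : CC a (b+1) = CC a b + X ^ (b+1) * CP a b := by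
  cases a with
  | zero => simp [CC_zero, CP]
  | succ a2 => exact pascalA a2 b

lemma pascalI4 (a b : ℕ) : CC a (b+1) = CP a b + X ^ a * CC a b := by
  cases a with
  | zero => simp [CC_zero, CP]
  | succ a2 => exact pascalB a2 b

lemma CP_succ (a b : ℕ) : CP (a+1) b = CC a (b+1) := rfl

noncomputable def Dl (a b r : ℕ) : PowerSeries ℚ := CC a b - X ^ r * CP a b

lemma Dl_zero (b r : ℕ) : Dl 0 b r = 1 := by simp [Dl, CP, CC_zero]

lemma Dl_diag (a : ℕ) : Dl (a+1) a 0 = 0 := by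
  rw [Dl, CP, pow_zero, one_mul, CC_symm a (a+1), sub_self]

lemma recR1 (a b r : ℕ) :
    Dl (a+1) (b+1) r = Dl (a+1) b r + X ^ (b+1) * Dl a (b+1) (r+1) := by
  have pa := pascalA a b
  have i2 := pascalI2 a (b+1)
  simp only [Dl, CP_succ]
  linear_combination pa - (X : PowerSeries ℚ) ^ r * i2

lemma recR2 (a b r : ℕ) :
    Dl (a+1) (b+1) (r+1) = Dl a (b+1) (r+1) + X ^ (a+1) * Dl (a+1) b r := by
  have pb := pascalB a b
  have i4 := pascalI4 a (b+1)
  simp only [Dl, CP_succ]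
  linear_combination pb - (X : PowerSeries ℚ) ^ (r+1) * i4

def NN (f : PowerSeries ℚ) : Prop := ∀ k : ℕ, 0 ≤ coeff (R := ℚ) k f

lemma NN_zero : NN 0 := fun k => by simp
lemma NN_one : NN 1 := fun k => by
  rw [coeff_one]; split <;> norm_num
lemma NN_add {f g : PowerSeries ℚ} (hf : NN f) (hg : NN g) : NN (f + g) := fun k => by
  rw [map_add]; exact add_nonneg (hf k) (hg k)
lemma NN_X_pow (m : ℕ) : NN ((X : PowerSeries ℚ) ^ m) := fun k => by
  rw [coeff_X_pow]; split <;> norm_num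
lemma NN_mul {f g : PowerSeries ℚ} (hf : NN f) (hg : NN g) : NN (f * g) := fun k => by
  rw [coeff_mul]
  exact Finset.sum_nonneg fun p _ => mul_nonneg (hf p.1) (hg p.2)

lemma NN_Dl_aux (n : ℕ) : ∀ a b r : ℕ, a + b ≤ n → a + r ≤ b → NN (Dl (a+1) b r) := by
  induction n with
  | zero =>
    intro a b r hn hc
    have ha : a = 0 := by omega
    have hb : b = 0 := by omega
    have hr : r = 0 := by omega
    subst ha; subst hb; subst hr
    rw [Dl_diag 0]
    exact NN_zero
  | succ n ih =>
    intro a b r hn hc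
    by_cases heq : a + r = b
    · cases r with
      | zero =>
        have hab : b = a := by omega
        subst hab
        rw [Dl_diag]
        exact NN_zero
      | succ r2 =>
        obtain ⟨b2, rfl⟩ : ∃ b2, b = b2 + 1 := ⟨a + r2, by omega⟩
        rw [recR2 a b2 r2]
        apply NN_add
        · cases a with
          | zero => rw [Dl_zero]; exact NN_one
          | succ a2 => exact ih a2 (b2+1) (r2+1) (by omega) (by omega)
        · exact NN_mul (NN_X_pow (a+1)) (ih a b2 r2 (by omega) (by omega))
    · obtain ⟨b2, rfl⟩ : ∃ b2, b = b2 + 1 := ⟨b - 1, by omega⟩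
      rw [recR1 a b2 r]
      apply NN_add
      · exact ih a b2 r (by omega) (by omega)
      · apply NN_mul (NN_X_pow (b2+1))
        cases a with
        | zero => rw [Dl_zero]; exact NN_one
        | succ a2 => exact ih a2 (b2+1) (r+1) (by omega) (by omega)

lemma NN_Dl (a b : ℕ) (h : a ≤ b) : NN (Dl (a+1) b 0) :=
  NN_Dl_aux (a+b) a b 0 le_rfl (by omega)

/-- For `1 ≤ s ≤ ⌈L/2⌉`, the polynomial `[L, s] - [L, s-1]` has nonnegative
coefficients. -/
theorem stmt6 (L s : ℕ) (h1 : 1 ≤ s) (h2 : s ≤ (L + 1) / 2) :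
    ∀ k : ℕ, 0 ≤ PowerSeries.coeff (R := ℚ) k (gauss L s - gauss L ((s : ℤ) - 1)) := by
  intro k
  have hsL : s ≤ L := by omega
  obtain ⟨a, rfl⟩ : ∃ a, s = a + 1 := ⟨s - 1, by omega⟩
  obtain ⟨b, rfl⟩ : ∃ b, L = a + 1 + b := ⟨L - (a + 1), by omega⟩
  have hba : a ≤ b := by omega
  have e1 : gauss (a+1+b) ((a+1 : ℕ) : ℤ) = CC (a+1) b := by
    rw [gauss, if_pos]
    · have t1 : (((a+1 : ℕ) : ℤ)).toNat = a + 1 := by simp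
      rw [t1, show a + 1 + b - (a+1) = b from by omega, CC]
    · constructor
      · positivity
      · push_cast; omega
  have e2 : gauss (a+1+b) (((a+1 : ℕ) : ℤ) - 1) = CC a (b+1) := by
    have hc : ((a+1 : ℕ) : ℤ) - 1 = ((a : ℕ) : ℤ) := by push_cast; ring
    rw [hc, gauss, if_pos]
    · have t1 : (((a : ℕ) : ℤ)).toNat = a := by simp
      rw [t1, show a + 1 + b - a = b + 1 from by omega, CC,
        show a + (b+1) = a + 1 + b from by omega]
    · constructor
      · positivity
      · push_cast; omega
  rw [e1, e2]
  have e3 : CC (a+1) b - CC a (b+1) = Dl (a+1) b 0 := by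
    rw [Dl, CP_succ, pow_zero, one_mul]
  rw [e3]
  exact NN_Dl a b hba k
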